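/- Let p be an LTP agent in a signed digraph with m > 1 stubborn agents satisfying the reachability assumption, and suppose all incoming edges at each node in N_p are cooperative (have positive weight). Then under the signed Friedkin-Johnsen model, the steady-state opinions satisfy x*_p = x*_q for every q ∈ N_p, for every initial opinion vector x(0). -/

import Mathlib

/-- `l` is a directed path (a walk without repeated nodes) from `s` to `t` in the
digraph with edge relation `E`. -/
def IsPathList {V : Type*} (E : V → V → Prop) (s t : V) (l : List V) : Prop :=
  l.Chain' E ∧ l.head? = some s ∧ l.getLast? = some t ∧ l.Nodup

/-- `q` is persuaded by `p`: `q` is a non-stubborn node distinct from `p` such that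
every directed path from every stubborn node to `q` traverses `p`. -/
def Persuaded {V : Type*} (E : V → V → Prop) (S : Set V) (p q : V) : Prop :=
  q ∉ S ∧ q ≠ p ∧ ∀ s ∈ S, ∀ l : List V, IsPathList E s q l → p ∈ l

/-- `p` is a Locally Topologically Persuasive (LTP) agent: some non-stubborn node is
persuaded by `p`, and if `p` is non-stubborn then there is no node `c ≠ p` through
which every path from stubborn nodes to `p` passes. -/
def IsLTP {V : Type*} (E : V → V → Prop) (S : Set V) (p : V) : Prop :=
  (∃ q, Persuaded E S p q) ∧
  (p ∉ S → ¬ ∃ c, c ≠ p ∧ ∀ s ∈ S, ∀ l : List V, IsPathList E s p l → c ∈ l)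

/-- Closure: any in-neighbor of a persuaded node is `p` or persuaded. -/
lemma persuaded_closed {V : Type*} {E : V → V → Prop} {S : Set V} {p q j : V}
    (hq : Persuaded E S p q) (hj : E j q) : j = p ∨ Persuaded E S p j := by
  by_cases hjp : j = p
  · exact Or.inl hjp
  right
  obtain ⟨hqS, hqp, hpath⟩ := hq
  have hjS : j ∉ S := by
    intro hjS
    have hjq : j ≠ q := by rintro rfl; exact hqS hjS
    have hmem := hpath j hjS [j, q]
      ⟨List.isChain_pair.mpr hj, rfl, rfl, by simp [hjq]⟩
    simp only [List.mem_cons, List.mem_singleton, List.not_mem_nil, or_false] at hmem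
    rcases hmem with h | h
    · exact hjp h.symm
    · exact hqp h.symm
  refine ⟨hjS, hjp, ?_⟩
  intro s hs l hl
  obtain ⟨hc, hh, hlast, hnd⟩ := hl
  have hlne : l ≠ [] := by rintro rfl; simp at hh
  by_cases hql : q ∈ l
  · -- take the prefix of l up to (first occurrence of) q : a path from s to q
    obtain ⟨l₁, l₂, rfl⟩ := List.append_of_mem hql
    have hpre : (l₁ ++ [q]) <+: (l₁ ++ q :: l₂) := ⟨l₂, by simp⟩
    have hl1ne : l₁ ≠ [] := by
      rintro rfl
      simp only [List.nil_append, List.head?_cons, Option.some.injEq] at hh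
      exact hqS (hh ▸ hs)
    have hpathq : IsPathList E s q (l₁ ++ [q]) := by
      refine ⟨hc.prefix hpre, ?_, List.getLast?_concat, hnd.sublist hpre.sublist⟩
      cases l₁ with
      | nil => exact absurd rfl hl1ne
      | cons a t =>
        rw [List.head?_append] at hh
        simpa using hh
    have := hpath s hs _ hpathq
    exact hpre.sublist.subset this
  · -- extend l by q : a path from s to q
    have hlj : l.getLast? = some j := hlast
    have hpathq : IsPathList E s q (l ++ [q]) := by
      refine ⟨?_, ?_, List.getLast?_concat, ?_⟩
      · show List.IsChain E (l ++ [q]); rw [List.isChain_append]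
        refine ⟨hc, List.isChain_singleton _, ?_⟩
        intro a ha b hb
        rw [hlj, Option.mem_some_iff] at ha
        simp only [List.head?_cons, Option.mem_some_iff] at hb
        rw [← ha, ← hb]; exact hj
      · rw [List.head?_append, hh]; rfl
      · simp [List.nodup_append, hnd, hql]
        rintro a ha rfl; exact hql ha
    have := hpath s hs _ hpathq
    rw [List.mem_append] at this
    rcases this with h | h
    · exact h
    · simp only [List.mem_singleton] at h
      exact absurd h.symm hqp

/-- Maximum principle: along persuaded nodes, `x` is dominated by `x p`. -/
lemma persuaded_le {n : ℕ} {W : Matrix (Fin n) (Fin n) ℝ} {E : Fin n → Fin n → Prop}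
    {S : Set (Fin n)} {p : Fin n}
    (hE : ∀ i j, E j i ↔ W i j ≠ 0)
    (hcoop : ∀ q, Persuaded E S p q → ∀ j, 0 ≤ W q j)
    (hW1 : ∀ q, Persuaded E S p q → ∑ j, W q j = 1)
    (hreach : ∀ v, v ∉ S → ∃ s ∈ S, ∃ l : List (Fin n), IsPathList E s v l)
    (x : Fin n → ℝ)
    (hx : ∀ q, Persuaded E S p q → x q = ∑ j, W q j * x j) :
    ∀ q, Persuaded E S p q → x q ≤ x p := by
  classical
  set T : Finset (Fin n) :=
    Finset.univ.filter (fun v => v = p ∨ Persuaded E S p v) with hT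
  have hpT : p ∈ T := by simp [hT]
  have hTne : T.Nonempty := ⟨p, hpT⟩
  set C := T.sup' hTne x with hC
  have hle : ∀ v ∈ T, x v ≤ C := fun v hv => Finset.le_sup' x hv
  -- step: at a persuaded node attaining the max, all in-neighbors attain the max
  have step : ∀ q, Persuaded E S p q → x q = C → ∀ j, W q j ≠ 0 → x j = C := by
    intro q hq hqC j hWj
    have hjT : ∀ j, W q j ≠ 0 → j ∈ T := by
      intro j hj
      have := persuaded_closed hq ((hE q j).mpr hj)
      simp [hT, this]
    have hsum : ∑ j, W q j * (C - x j) = 0 := by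
      have h1 : ∑ j, W q j * C = C := by
        rw [← Finset.sum_mul, hW1 q hq, one_mul]
      have h2 := hx q hq
      calc ∑ j, W q j * (C - x j) = (∑ j, W q j * C) - ∑ j, W q j * x j := by
            rw [← Finset.sum_sub_distrib]; congr 1; ext j; ring
        _ = C - x q := by rw [h1, h2]
        _ = 0 := by rw [hqC, sub_self]
    have hnonneg : ∀ j ∈ Finset.univ, 0 ≤ W q j * (C - x j) := by
      intro j _
      by_cases h : W q j = 0
      · simp [h]
      · exact mul_nonneg (hcoop q hq j) (sub_nonneg.mpr (hle j (hjT j h)))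
    have := (Finset.sum_eq_zero_iff_of_nonneg hnonneg).mp hsum j (Finset.mem_univ j)
    rcases mul_eq_zero.mp this with h | h
    · exact absurd h hWj
    · linarith [sub_eq_zero.mp h]
  -- walk back along a path from a stubborn node: the max propagates to p
  have walk : ∀ N : ℕ, ∀ l : List (Fin n), l.length ≤ N → ∀ s ∈ S, ∀ q,
      Persuaded E S p q → IsPathList E s q l → x q = C → x p = C := by
    intro N
    induction N with
    | zero =>
      intro l hl s hs q hq hpl _
      obtain ⟨_, hh, _, _⟩ := hpl
      have hnil : l = [] := List.length_eq_zero_iff.mp (Nat.le_zero.mp hl)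
      simp [hnil] at hh
    | succ N ih =>
      intro l hl s hs q hq hpl hqC
      have hpmem : p ∈ l := hq.2.2 s hs l hpl
      obtain ⟨hc, hh, hlast, hnd⟩ := hpl
      rcases List.eq_nil_or_concat l with rfl | ⟨L, b, rfl⟩
      · simp at hh
      · -- b = q
        have hbq : q = b := by
          rw [List.concat_eq_append, List.getLast?_concat] at hlast
          exact (Option.some_injective _ hlast).symm
        subst hbq
        rcases List.eq_nil_or_concat L with rfl | ⟨L', j, rfl⟩
        · -- l = [q]; but p ∈ l and p ≠ q : contradiction
          simp only [List.concat_eq_append, List.nil_append, List.mem_singleton] at hpmem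
          exact absurd hpmem.symm hq.2.1
        · -- l = L' ++ [j, q]
          have hEjq : E j q := by
            have := hc
            rw [List.concat_eq_append, List.concat_eq_append, List.append_assoc] at this
            have h2 := this.suffix ⟨L', rfl⟩
            simpa using h2
          have hxj : x j = C := step q hq hqC j ((hE q j).mp hEjq)
          rcases persuaded_closed hq hEjq with rfl | hjpers
          · exact hxj
          · -- recurse on the path L'.concat j from s to j
            have hpre : (L'.concat j) <+: ((L'.concat j).concat q) := ⟨[q], by simp⟩
            have hne : L'.concat j ≠ [] := by simp
            have hpath : IsPathList E s j (L'.concat j) := by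
              refine ⟨hc.prefix hpre, ?_, by simp [List.concat_eq_append,
                List.getLast?_concat], hnd.sublist hpre.sublist⟩
              rw [show (L'.concat j).concat q = (L'.concat j) ++ [q] by simp,
                List.head?_append] at hh
              cases hcl : (L'.concat j).head? with
              | none => exact absurd (List.head?_eq_none_iff.mp hcl) hne
              | some a =>
                rw [hcl] at hh
                simpa using hh
            have hlen : (L'.concat j).length ≤ N := by
              have : ((L'.concat j).concat q).length ≤ N + 1 := hl
              simp only [List.length_concat] at this ⊢
              omega
            exact ih _ hlen s hs j hjpers hpath hxj
  -- conclude
  intro q hq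
  obtain ⟨q0, hq0T, hq0C⟩ := Finset.exists_mem_eq_sup' hTne x
  have hq0C' : x q0 = C := hq0C.symm
  have hqT : q ∈ T := by simp [hT, hq]
  have hxp : x p = C := by
    simp only [hT, Finset.mem_filter] at hq0T
    rcases hq0T.2 with rfl | hq0p
    · exact hq0C'
    · obtain ⟨s, hs, l, hl⟩ := hreach q0 hq0p.1
      exact walk l.length l le_rfl s hs q0 hq0p hl hq0C'
  rw [hxp]
  exact hle q hqT

/-- If `p` is an LTP agent of a signed digraph with more than one stubborn agent,
every non-stubborn agent has a path from a stubborn one, and all incoming edges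
at each node of `N_p` are cooperative, then under the signed Friedkin-Johnsen
model the steady-state opinions of `p` and of every `q ∈ N_p` coincide, for
every initial opinion vector. -/
theorem LTP_opinion_cluster {n : ℕ}
    (W : Matrix (Fin n) (Fin n) ℝ) (β : Fin n → ℝ) (E : Fin n → Fin n → Prop)
    (S : Set (Fin n))
    (hE : ∀ i j, E j i ↔ W i j ≠ 0)
    (hS : ∀ i, i ∈ S ↔ 0 < β i)
    (hβ : ∀ i, β i ∈ Set.Icc (0 : ℝ) 1)
    (hW : ∀ i, ∑ j, |W i j| = 1)
    (hm : 1 < Nat.card S)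
    (hreach : ∀ v, v ∉ S → ∃ s ∈ S, ∃ l : List (Fin n), IsPathList E s v l)
    (p : Fin n) (hp : IsLTP E S p)
    (hcoop : ∀ q, Persuaded E S p q → ∀ j, 0 ≤ W q j) :
    ∀ x0 : Fin n → ℝ, ∀ q, Persuaded E S p q →
      (((1 - (1 - Matrix.diagonal β) * W)⁻¹ * Matrix.diagonal β).mulVec x0) p =
      (((1 - (1 - Matrix.diagonal β) * W)⁻¹ * Matrix.diagonal β).mulVec x0) q := by
  classical
  intro x0 q hq
  set D := Matrix.diagonal β with hD
  by_cases hdet : IsUnit (1 - (1 - D) * W).det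
  · set x : Fin n → ℝ := ((1 - (1 - D) * W)⁻¹ * D).mulVec x0 with hxdef
    have hMx : (1 - (1 - D) * W).mulVec x = D.mulVec x0 := by
      rw [hxdef, Matrix.mulVec_mulVec, ← Matrix.mul_assoc,
        Matrix.mul_nonsing_inv _ hdet, Matrix.one_mul]
    have hβ0 : ∀ r, Persuaded E S p r → β r = 0 := fun r hr =>
      le_antisymm (not_lt.mp (fun h => hr.1 ((hS r).mpr h))) (hβ r).1
    have hx : ∀ r, Persuaded E S p r → x r = ∑ j, W r j * x j := by
      intro r hr
      have h := congrFun hMx r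
      have h1 : (1 : Matrix (Fin n) (Fin n) ℝ) - D
          = Matrix.diagonal (fun i => 1 - β i) := by
        rw [hD, ← Matrix.diagonal_one, Matrix.diagonal_sub]
      have hL : ((1 - (1 - D) * W).mulVec x) r
          = x r - (1 - β r) * ∑ j, W r j * x j := by
        rw [Matrix.sub_mulVec, Matrix.one_mulVec, Pi.sub_apply]
        congr 1
        simp only [Matrix.mulVec, dotProduct, h1, Matrix.diagonal_mul,
          Finset.mul_sum, mul_assoc]
      have hR : (D.mulVec x0) r = β r * x0 r := by
        simp [hD, Matrix.mulVec, dotProduct, Matrix.diagonal_apply,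
          Finset.sum_ite_eq', mul_comm]
      rw [hL, hR, hβ0 r hr] at h
      simp only [sub_zero, one_mul, zero_mul] at h
      linarith
    have hW1 : ∀ r, Persuaded E S p r → ∑ j, W r j = 1 := by
      intro r hr
      rw [← hW r]
      exact Finset.sum_congr rfl fun j _ => (abs_of_nonneg (hcoop r hr j)).symm
    have h1 := persuaded_le hE hcoop hW1 hreach x hx q hq
    have hx' : ∀ r, Persuaded E S p r → (-x) r = ∑ j, W r j * (-x) j := by
      intro r hr
      simp only [Pi.neg_apply, mul_neg, Finset.sum_neg_distrib]
      rw [hx r hr]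
    have h2 := persuaded_le hE hcoop hW1 hreach (-x) hx' q hq
    simp only [Pi.neg_apply, neg_le_neg_iff] at h2
    exact le_antisymm h2 h1
  · rw [Matrix.nonsing_inv_apply_not_isUnit _ hdet]
    simp [Matrix.zero_mulVec]
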